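/- arXiv:2603.01555 — 4 statements merged into one kernel-verified Lean document; each statement's English description precedes it below -/
import Mathlib

section
/- Let p ∈ [1,∞), let a < b, and let u : [a,b] → ℝ be absolutely continuous with u(a) = u(b) = 0 and u′ ∈ L^p(a,b). Then ‖u‖_{L^p(a,b)} ≤ (b−a) / p^{1/p} · ‖u′‖_{L^p(a,b)}. -/
open MeasureTheory intervalIntegral Set

theorem holder_step (p a b : ℝ) (hp : 1 ≤ p) (hab : a < b) (g : ℝ → ℝ)
    (hg : IntervalIntegrable g MeasureTheory.volume a b)
    (hgp : IntervalIntegrable (fun z => |g z| ^ p) MeasureTheory.volume a b)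
    (x : ℝ) (hx : x ∈ Set.Icc a b) :
    (∫ z in a..x, |g z|) ≤ (x - a) ^ ((p-1)/p) * (∫ z in a..b, |g z| ^ p) ^ (1/p) := by
  have hp0 : 0 < p := lt_of_lt_of_le one_pos hp
  have hax : a ≤ x := hx.1
  have hxb : x ≤ b := hx.2
  have hGmono : (∫ z in a..x, |g z| ^ p) ≤ ∫ z in a..b, |g z| ^ p := by
    apply intervalIntegral.integral_mono_interval le_rfl hax hxb ?_ hgp
    · filter_upwards with z using Real.rpow_nonneg (abs_nonneg _) p
  have hGx0 : 0 ≤ ∫ z in a..x, |g z| ^ p :=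
    intervalIntegral.integral_nonneg hax (fun z _ => Real.rpow_nonneg (abs_nonneg _) p)
  have hmono2 : (∫ z in a..x, |g z| ^ p) ^ (1/p) ≤ (∫ z in a..b, |g z| ^ p) ^ (1/p) :=
    Real.rpow_le_rpow hGx0 hGmono (by positivity)
  -- reduce to x-interval
  rcases eq_or_lt_of_le hp with hp1 | hp1
  · -- p = 1
    calc (∫ z in a..x, |g z|) ≤ (∫ z in a..x, |g z| ^ p) := by
          apply le_of_eq; apply intervalIntegral.integral_congr
          intro z _; simp [← hp1]
      _ ≤ ∫ z in a..b, |g z| ^ p := hGmono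
      _ = (x-a) ^ ((p-1)/p) * (∫ z in a..b, |g z| ^ p) ^ (1/p) := by
          rw [← hp1]; simp
  · -- p > 1
    set q := p / (p - 1) with hq
    have hpq : p.HolderConjugate q := Real.HolderConjugate.conjExponent hp1
    have hg1 : IntegrableOn g (Ioc a x) := by
      have := (intervalIntegrable_iff_integrableOn_Ioc_of_le hab.le).mp hg
      exact this.mono_set (Ioc_subset_Ioc_right hxb)
    have hgp1 : IntegrableOn (fun z => |g z| ^ p) (Ioc a x) := by
      have := (intervalIntegrable_iff_integrableOn_Ioc_of_le hab.le).mp hgp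
      exact this.mono_set (Ioc_subset_Ioc_right hxb)
    set μ := volume.restrict (Ioc a x) with hμ
    have hmem : MemLp (fun z => |g z|) (ENNReal.ofReal p) μ := by
      have hmeas : AEStronglyMeasurable g μ := hg1.aestronglyMeasurable
      have h1 : MemLp (fun z => ‖g z‖ ^ (ENNReal.ofReal p).toReal)
          ((ENNReal.ofReal p) / (ENNReal.ofReal p)) μ := by
        rw [ENNReal.div_self (by simp [hp0]) (by simp)]
        rw [memLp_one_iff_integrable]
        apply hgp1.congr
        filter_upwards with z
        simp [ENNReal.toReal_ofReal hp0.le, Real.norm_eq_abs]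
      have := (memLp_norm_rpow_iff hmeas (by simp [hp0]) (by simp)).mp h1
      exact this.norm
    have hconst : MemLp (fun _ : ℝ => (1:ℝ)) (ENNReal.ofReal q) μ := by
      haveI : IsFiniteMeasure μ := by
        exact ⟨by simp [hμ, Measure.restrict_apply_univ, Real.volume_Ioc]⟩
      exact memLp_const 1
    have hH := integral_mul_le_Lp_mul_Lq_of_nonneg (μ := μ) hpq
      (f := fun z => |g z|) (g := fun _ => 1)
      (Filter.Eventually.of_forall fun z => abs_nonneg _)
      (Filter.Eventually.of_forall fun z => one_pos.le) hmem hconst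
    simp only [mul_one] at hH
    have hμconst : (∫ _ : ℝ, (1:ℝ) ^ q ∂μ) = x - a := by
      simp [hax, Real.one_rpow, hμ, Real.volume_Ioc, ENNReal.toReal_ofReal (by linarith : (0:ℝ) ≤ x - a)]
    rw [hμconst] at hH
    calc (∫ z in a..x, |g z|) = ∫ z, |g z| ∂μ := by
          rw [intervalIntegral.integral_of_le hax]
      _ ≤ (∫ z, |g z| ^ p ∂μ) ^ (1/p) * (x - a) ^ (1/q) := hH
      _ = (x - a) ^ ((p-1)/p) * (∫ z in a..x, |g z| ^ p) ^ (1/p) := by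
          rw [mul_comm, intervalIntegral.integral_of_le hax]
          congr 2
          rw [hq]
          field_simp
      _ ≤ (x - a) ^ ((p-1)/p) * (∫ z in a..b, |g z| ^ p) ^ (1/p) := by
          apply mul_le_mul_of_nonneg_left hmono2 (Real.rpow_nonneg (by linarith) _)


/-- Sampling inequality on an interval: if `u : [a,b] → ℝ` is absolutely continuous with
`u(a) = u(b) = 0` and derivative `g ∈ Lᵖ(a,b)`, `1 ≤ p < ∞`, then
`‖u‖_{Lᵖ(a,b)} ≤ (b - a) p^{-1/p} ‖g‖_{Lᵖ(a,b)}`. -/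
theorem stmt_9 (p a b : ℝ) (hp : 1 ≤ p) (hab : a < b) (u g : ℝ → ℝ)
    (hu : ∀ x ∈ Set.Icc a b, u x = ∫ z in a..x, g z)
    (hub : u b = 0)
    (hg : IntervalIntegrable g MeasureTheory.volume a b)
    (hgp : IntervalIntegrable (fun z => |g z| ^ p) MeasureTheory.volume a b) :
    (∫ x in a..b, |u x| ^ p) ^ (1 / p) ≤
      (b - a) / p ^ (1 / p) * (∫ z in a..b, |g z| ^ p) ^ (1 / p) := by
  have hp0 : 0 < p := lt_of_lt_of_le one_pos hp
  set G := ∫ z in a..b, |g z| ^ p with hGdef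
  have hG0 : 0 ≤ G :=
    intervalIntegral.integral_nonneg hab.le (fun z _ => Real.rpow_nonneg (abs_nonneg _) p)
  set U : ℝ → ℝ := fun x => ∫ t in a..x, g t with hU
  have hUcont : ContinuousOn U (Icc a b) := by
    have := intervalIntegral.continuousOn_primitive_interval'
      (μ := volume) (f := g) (b₁ := a) (b₂ := b) hg left_mem_uIcc
    rwa [uIcc_of_le hab.le] at this
  -- pointwise bound
  have key : ∀ x ∈ Icc a b, |U x| ^ p ≤ (x - a) ^ (p - 1) * G := by
    intro x hx
    have hax : a ≤ x := hx.1
    have h1 : |U x| ≤ ∫ z in a..x, |g z| :=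
      intervalIntegral.abs_integral_le_integral_abs hax
    have h2 : (∫ z in a..x, |g z|) ≤ (x - a) ^ ((p-1)/p) * G ^ (1/p) :=
      holder_step p a b hp hab g hg hgp x hx
    have h3 : |U x| ^ p ≤ ((x - a) ^ ((p-1)/p) * G ^ (1/p)) ^ p :=
      Real.rpow_le_rpow (abs_nonneg _) (h1.trans h2) hp0.le
    refine h3.trans (le_of_eq ?_)
    rw [Real.mul_rpow (Real.rpow_nonneg (by linarith) _) (Real.rpow_nonneg hG0 _)]
    rw [← Real.rpow_mul (by linarith : (0:ℝ) ≤ x - a), ← Real.rpow_mul hG0]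
    rw [div_mul_cancel₀ _ hp0.ne', one_div, inv_mul_cancel₀ hp0.ne', Real.rpow_one]
  -- integrability
  have hUint : IntervalIntegrable (fun x => |U x| ^ p) volume a b := by
    apply ContinuousOn.intervalIntegrable
    rw [uIcc_of_le hab.le]
    exact (hUcont.abs).rpow_const (fun x _ => Or.inr hp0.le)
  have hRint : IntervalIntegrable (fun x => (x - a) ^ (p - 1) * G) volume a b := by
    apply ContinuousOn.intervalIntegrable
    apply ContinuousOn.mul _ continuousOn_const
    exact ((continuous_id.sub continuous_const).continuousOn).rpow_const
      (fun x _ => Or.inr (by linarith))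
  have hmain : (∫ x in a..b, |u x| ^ p) ≤ (b - a) ^ p / p * G := by
    have e1 : (∫ x in a..b, |u x| ^ p) = ∫ x in a..b, |U x| ^ p := by
      apply intervalIntegral.integral_congr
      intro x hxx
      rw [uIcc_of_le hab.le] at hxx
      show |u x| ^ p = |U x| ^ p
      rw [hu x hxx]
    rw [e1]
    calc (∫ x in a..b, |U x| ^ p) ≤ ∫ x in a..b, (x - a) ^ (p - 1) * G :=
          intervalIntegral.integral_mono_on hab.le hUint hRint key
      _ = (∫ x in a..b, (x - a) ^ (p - 1)) * G := by
          rw [intervalIntegral.integral_mul_const]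
      _ = (b - a) ^ p / p * G := by
          congr 1
          have e2 : (∫ x in a..b, (x - a) ^ (p - 1)) = ∫ x in (0:ℝ)..(b - a), x ^ (p - 1) := by
            have h5 := intervalIntegral.integral_comp_sub_right (a := a) (b := b)
              (fun t => t ^ (p-1)) a
            simpa using h5
          rw [e2, integral_rpow (Or.inl (by linarith))]
          rw [sub_add_cancel, Real.zero_rpow hp0.ne', sub_zero]
  -- take p-th roots
  have h4 : (∫ x in a..b, |u x| ^ p) ^ (1/p) ≤ ((b - a) ^ p / p * G) ^ (1/p) :=
    Real.rpow_le_rpow (intervalIntegral.integral_nonneg hab.le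
      (fun x _ => Real.rpow_nonneg (abs_nonneg _) p)) hmain (by positivity)
  refine h4.trans (le_of_eq ?_)
  rw [Real.mul_rpow (div_nonneg (Real.rpow_nonneg (by linarith) _) hp0.le) hG0,
    Real.div_rpow (Real.rpow_nonneg (by linarith) _) hp0.le,
    ← Real.rpow_mul (by linarith : (0:ℝ) ≤ b - a), mul_one_div, div_self hp0.ne',
    Real.rpow_one]
end

section
/- Let 0 = x_0 < x_1 < ⋯ < x_n = 1, h = max_i (x_i − x_{i-1}), and p ∈ [1,∞). If g : [0,1] → ℝ is absolutely continuous with g′ ∈ L^p(0,1) and g(x_i) = 0 for all i ∈ {0,…,n}, then ‖g‖_{L^p(0,1)} ≤ h / p^{1/p} · ‖g′‖_{L^p(0,1)}. -/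
open MeasureTheory intervalIntegral Set

lemma holder_key {f : ℝ → ℝ} {a t p : ℝ} (hp : 1 ≤ p) (hat : a ≤ t)
    (hf : IntervalIntegrable f volume a t)
    (hfp : IntervalIntegrable (fun z => |f z| ^ p) volume a t) :
    (∫ z in a..t, |f z|) ^ p ≤ (t - a) ^ (p - 1) * ∫ z in a..t, |f z| ^ p := by
  rcases eq_or_lt_of_le hp with hp1 | hp1
  · simp [← hp1]
  · have ppos : (0:ℝ) < p := lt_trans one_pos hp1
    set q : ℝ := p / (p - 1) with hqdef
    have hpq : p.HolderConjugate q := Real.HolderConjugate.conjExponent hp1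
    set μ := volume.restrict (Set.Ioc a t) with hμ
    haveI : IsFiniteMeasure μ := ⟨by
      rw [Measure.restrict_apply_univ]; exact measure_Ioc_lt_top⟩
    have hfm : AEStronglyMeasurable (fun z => |f z|) μ := hf.1.abs.aestronglyMeasurable
    have hmem : MemLp (fun z => |f z|) (ENNReal.ofReal p) μ := by
      have hne : ENNReal.ofReal p ≠ 0 := by
        simp [ENNReal.ofReal_eq_zero, not_le, ppos]
      have hnt : ENNReal.ofReal p ≠ ⊤ := ENNReal.ofReal_ne_top
      have h2 := (memLp_norm_rpow_iff (p := ENNReal.ofReal p) (q := ENNReal.ofReal p)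
        hfm hne hnt)
      rw [ENNReal.div_self hne hnt] at h2
      apply h2.mp
      rw [memLp_one_iff_integrable]
      have h3 : (fun x => ‖|f x|‖ ^ (ENNReal.ofReal p).toReal) = fun z => |f z| ^ p := by
        funext z
        rw [Real.norm_eq_abs, abs_abs, ENNReal.toReal_ofReal ppos.le]
      rw [h3]
      exact hfp.1
    have hone : MemLp (fun _ : ℝ => (1:ℝ)) (ENNReal.ofReal q) μ := memLp_const 1
    have hH := integral_mul_le_Lp_mul_Lq_of_nonneg (μ := μ) hpq
      (Filter.Eventually.of_forall fun z => abs_nonneg (f z))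
      (Filter.Eventually.of_forall fun _ => zero_le_one) hmem hone
    simp only [mul_one, Real.one_rpow] at hH
    rw [MeasureTheory.setIntegral_const, smul_eq_mul, mul_one,
      Real.volume_real_Ioc_of_le hat] at hH
    have hI : 0 ≤ ∫ z in Set.Ioc a t, |f z| ^ p := by
      apply MeasureTheory.integral_nonneg; intro z; positivity
    have hL : 0 ≤ ∫ z in Set.Ioc a t, |f z| := by
      apply MeasureTheory.integral_nonneg; intro z; positivity
    have hta : (0:ℝ) ≤ t - a := by linarith
    have hmono : (∫ z in Set.Ioc a t, |f z|) ^ p ≤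
        ((∫ z in Set.Ioc a t, |f z| ^ p) ^ (1/p) * (t - a) ^ (1/q)) ^ p :=
      Real.rpow_le_rpow hL hH ppos.le
    rw [intervalIntegral.integral_of_le hat, intervalIntegral.integral_of_le hat]
    refine hmono.trans (le_of_eq ?_)
    rw [Real.mul_rpow (Real.rpow_nonneg hI _) (Real.rpow_nonneg hta _),
      ← Real.rpow_mul hI, ← Real.rpow_mul hta,
      one_div_mul_cancel ppos.ne', Real.rpow_one]
    have : 1 / q * p = p - 1 := by
      rw [hqdef]
      field_simp
    rw [this, mul_comm]

/-- Sampling inequality: if `g : [0,1] → ℝ` is absolutely continuous with derivative in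
`Lᵖ(0,1)` and vanishes at nodes `0 = x₀ < ⋯ < xₙ = 1` with fill distance `h`, then
`‖g‖_{Lᵖ(0,1)} ≤ h p^{-1/p} ‖g'‖_{Lᵖ(0,1)}`. -/
theorem stmt_10 (n : ℕ) (hn : 0 < n) (p : ℝ) (hp : 1 ≤ p)
    (x : Fin (n + 1) → ℝ) (hx : StrictMono x) (h0 : x 0 = 0) (h1 : x (Fin.last n) = 1)
    (g g' : ℝ → ℝ)
    (hg : ∀ t ∈ Set.Icc (0:ℝ) 1, g t = g 0 + ∫ z in (0:ℝ)..t, g' z)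
    (hg'int : IntervalIntegrable g' MeasureTheory.volume 0 1)
    (hg'p : IntervalIntegrable (fun z => |g' z| ^ p) MeasureTheory.volume 0 1)
    (hzero : ∀ i, g (x i) = 0)
    (h : ℝ)
    (hdef : h = (Finset.univ.sup' (Finset.univ_nonempty_iff.mpr (Fin.pos_iff_nonempty.mp hn))
      fun i : Fin n => x i.succ - x i.castSucc)) :
    (∫ t in (0:ℝ)..1, |g t| ^ p) ^ (1 / p) ≤
      h / p ^ (1 / p) * (∫ z in (0:ℝ)..1, |g' z| ^ p) ^ (1 / p) := by
  have ppos : (0:ℝ) < p := lt_of_lt_of_le one_pos hp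
  have hxm := hx.monotone
  have hxl : ∀ i, (0:ℝ) ≤ x i := fun i => h0 ▸ hxm (Fin.zero_le i)
  have hxr : ∀ i, x i ≤ 1 := fun i => h1 ▸ hxm (Fin.le_last i)
  -- continuity of g on [0,1]
  have hGc : ContinuousOn (fun t => g 0 + ∫ z in (0:ℝ)..t, g' z) (Set.Icc 0 1) := by
    apply ContinuousOn.add continuousOn_const
    have := intervalIntegral.continuousOn_primitive_interval' hg'int Set.left_mem_uIcc
    rwa [Set.uIcc_of_le zero_le_one] at this
  have hgc : ContinuousOn g (Set.Icc 0 1) := hGc.congr hg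
  have hgpc : ContinuousOn (fun t => |g t| ^ p) (Set.Icc 0 1) :=
    (hgc.abs).rpow_const (fun z _ => Or.inr (by linarith))
  -- key per-interval estimate
  have key : ∀ a b : ℝ, 0 ≤ a → a ≤ b → b ≤ 1 → g a = 0 →
      (∫ t in a..b, |g t| ^ p) ≤ (b - a) ^ p / p * ∫ z in a..b, |g' z| ^ p := by
    intro a b ha0 hab hb1 hga
    have hsub : Set.uIcc a b ⊆ Set.uIcc (0:ℝ) 1 := by
      rw [Set.uIcc_of_le hab, Set.uIcc_of_le zero_le_one]
      exact Set.Icc_subset_Icc ha0 hb1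
    have hg'pab : IntervalIntegrable (fun z => |g' z| ^ p) MeasureTheory.volume a b :=
      hg'p.mono_set hsub
    have hC : 0 ≤ ∫ z in a..b, |g' z| ^ p :=
      intervalIntegral.integral_nonneg hab (fun u _ => by positivity)
    have hpt : ∀ t ∈ Set.Icc a b,
        |g t| ^ p ≤ (t - a) ^ (p - 1) * ∫ z in a..b, |g' z| ^ p := by
      intro t ht
      have hta : a ≤ t := ht.1
      have htb : t ≤ b := ht.2
      have hsub2 : Set.uIcc a t ⊆ Set.uIcc (0:ℝ) 1 := by
        rw [Set.uIcc_of_le hta, Set.uIcc_of_le zero_le_one]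
        exact Set.Icc_subset_Icc ha0 (htb.trans hb1)
      have hg'at : IntervalIntegrable g' MeasureTheory.volume a t := hg'int.mono_set hsub2
      have hg'pat : IntervalIntegrable (fun z => |g' z| ^ p) MeasureTheory.volume a t :=
        hg'p.mono_set hsub2
      have hgt : g t = ∫ z in a..t, g' z := by
        have hsub0a : Set.uIcc 0 a ⊆ Set.uIcc (0:ℝ) 1 := by
          rw [Set.uIcc_of_le ha0, Set.uIcc_of_le zero_le_one]
          exact Set.Icc_subset_Icc le_rfl (hab.trans hb1)
        have h0a : IntervalIntegrable g' MeasureTheory.volume 0 a := hg'int.mono_set hsub0a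
        have e1 : g t = g 0 + ∫ z in (0:ℝ)..t, g' z := hg t ⟨ha0.trans hta, htb.trans hb1⟩
        have e2 : g a = g 0 + ∫ z in (0:ℝ)..a, g' z := hg a ⟨ha0, hab.trans hb1⟩
        have e3 : (∫ z in (0:ℝ)..a, g' z) + ∫ z in a..t, g' z = ∫ z in (0:ℝ)..t, g' z :=
          intervalIntegral.integral_add_adjacent_intervals h0a hg'at
        rw [hga] at e2
        rw [e1, ← e3]
        linarith [e2]
      have habs : |g t| ≤ ∫ z in a..t, |g' z| := by
        rw [hgt]
        exact intervalIntegral.abs_integral_le_integral_abs hta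
      have h1' : |g t| ^ p ≤ (∫ z in a..t, |g' z|) ^ p :=
        Real.rpow_le_rpow (abs_nonneg _) habs ppos.le
      have h2' := holder_key hp hta hg'at hg'pat
      have h3' : (∫ z in a..t, |g' z| ^ p) ≤ ∫ z in a..b, |g' z| ^ p :=
        intervalIntegral.integral_mono_interval le_rfl hta htb
          (Filter.Eventually.of_forall fun z => by positivity) hg'pab
      calc |g t| ^ p ≤ (∫ z in a..t, |g' z|) ^ p := h1'
        _ ≤ (t - a) ^ (p - 1) * ∫ z in a..t, |g' z| ^ p := h2'
        _ ≤ (t - a) ^ (p - 1) * ∫ z in a..b, |g' z| ^ p :=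
            mul_le_mul_of_nonneg_left h3' (Real.rpow_nonneg (by linarith) _)
    have hint1 : IntervalIntegrable (fun t => |g t| ^ p) MeasureTheory.volume a b := by
      apply ContinuousOn.intervalIntegrable
      rw [Set.uIcc_of_le hab]
      exact hgpc.mono (Set.Icc_subset_Icc ha0 hb1)
    have hint2 : IntervalIntegrable
        (fun t => (t - a) ^ (p - 1) * ∫ z in a..b, |g' z| ^ p) MeasureTheory.volume a b := by
      apply ContinuousOn.intervalIntegrable
      exact (((continuousOn_id.sub continuousOn_const).rpow_const
        (fun z _ => Or.inr (by linarith))).mul continuousOn_const)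
    have hmono := intervalIntegral.integral_mono_on hab hint1 hint2 hpt
    have hpow : (∫ t in a..b, (t - a) ^ (p - 1)) = (b - a) ^ p / p := by
      have := intervalIntegral.integral_comp_sub_right (fun s => s ^ (p - 1)) a
        (a := a) (b := b)
      rw [this, sub_self, integral_rpow (Or.inl (by linarith)), sub_add_cancel,
        Real.zero_rpow ppos.ne', sub_zero]
    calc (∫ t in a..b, |g t| ^ p)
        ≤ ∫ t in a..b, (t - a) ^ (p - 1) * ∫ z in a..b, |g' z| ^ p := hmono
      _ = (∫ t in a..b, (t - a) ^ (p - 1)) * ∫ z in a..b, |g' z| ^ p :=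
          intervalIntegral.integral_mul_const _ _
      _ = (b - a) ^ p / p * ∫ z in a..b, |g' z| ^ p := by rw [hpow]
  -- the partition as a ℕ-indexed family
  set y : ℕ → ℝ := fun k => x ⟨min k n, Nat.lt_succ_of_le (min_le_right k n)⟩ with hydef
  have hy : ∀ (k : ℕ) (hk : k ≤ n), y k = x ⟨k, Nat.lt_succ_of_le hk⟩ :=
    fun k hk => congrArg x (Fin.ext (min_eq_left hk))
  have hy0 : y 0 = 0 := by
    rw [hy 0 (Nat.zero_le n), ← h0]
    rfl
  have hyn : y n = 1 := by
    rw [hy n le_rfl, ← h1]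
    rfl
  have hystep : ∀ (k : ℕ), k < n → y k ≤ y (k + 1) := by
    intro k hk
    rw [hy k hk.le, hy (k + 1) hk]
    exact hxm (by simp [Fin.mk_le_mk])
  have hyIcc : ∀ k, y k ∈ Set.Icc (0:ℝ) 1 := fun k => ⟨hxl _, hxr _⟩
  have hgap : ∀ (k : ℕ) (hk : k < n), y (k + 1) - y k ≤ h := by
    intro k hk
    have hle := Finset.le_sup' (fun i : Fin n => x i.succ - x i.castSucc)
      (Finset.mem_univ (⟨k, hk⟩ : Fin n))
    rw [hy k hk.le, hy (k + 1) hk, hdef]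
    exact hle
  have hh : 0 ≤ h := le_trans (sub_nonneg.mpr (hystep 0 hn)) (hgap 0 hn)
  -- integrability on the pieces
  have hsuby : ∀ (k : ℕ), k < n → Set.uIcc (y k) (y (k + 1)) ⊆ Set.uIcc (0:ℝ) 1 := by
    intro k hk
    rw [Set.uIcc_of_le (hystep k hk), Set.uIcc_of_le zero_le_one]
    exact Set.Icc_subset_Icc (hyIcc k).1 (hyIcc (k + 1)).2
  have hFi : ∀ (k : ℕ), k < n →
      IntervalIntegrable (fun t => |g t| ^ p) MeasureTheory.volume (y k) (y (k + 1)) := by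
    intro k hk
    apply ContinuousOn.intervalIntegrable
    exact hgpc.mono (by rw [← Set.uIcc_of_le zero_le_one]; exact hsuby k hk)
  have hF'i : ∀ (k : ℕ), k < n →
      IntervalIntegrable (fun z => |g' z| ^ p) MeasureTheory.volume (y k) (y (k + 1)) :=
    fun k hk => hg'p.mono_set (hsuby k hk)
  have hsumF : ∑ k ∈ Finset.range n, ∫ t in y k..y (k + 1), |g t| ^ p
      = ∫ t in (0:ℝ)..1, |g t| ^ p := by
    have := intervalIntegral.sum_integral_adjacent_intervals hFi
    rwa [hy0, hyn] at this
  have hsumF' : ∑ k ∈ Finset.range n, ∫ z in y k..y (k + 1), |g' z| ^ p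
      = ∫ z in (0:ℝ)..1, |g' z| ^ p := by
    have := intervalIntegral.sum_integral_adjacent_intervals hF'i
    rwa [hy0, hyn] at this
  have main : (∫ t in (0:ℝ)..1, |g t| ^ p)
      ≤ h ^ p / p * ∫ z in (0:ℝ)..1, |g' z| ^ p := by
    rw [← hsumF, ← hsumF', Finset.mul_sum]
    apply Finset.sum_le_sum
    intro k hk
    have hk' : k < n := Finset.mem_range.mp hk
    have hC : 0 ≤ ∫ z in y k..y (k + 1), |g' z| ^ p :=
      intervalIntegral.integral_nonneg (hystep k hk') (fun u _ => by positivity)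
    have hzk : g (y k) = 0 := by rw [hy k hk'.le]; exact hzero _
    have h1' := key (y k) (y (k + 1)) (hyIcc k).1 (hystep k hk') (hyIcc (k + 1)).2 hzk
    have h2' : (y (k + 1) - y k) ^ p / p ≤ h ^ p / p := by
      exact (div_le_div_iff_of_pos_right ppos).mpr
        (Real.rpow_le_rpow (sub_nonneg.mpr (hystep k hk')) (hgap k hk') ppos.le)
    exact h1'.trans (mul_le_mul_of_nonneg_right h2' hC)
  have hLnn : 0 ≤ ∫ t in (0:ℝ)..1, |g t| ^ p :=
    intervalIntegral.integral_nonneg zero_le_one (fun u _ => by positivity)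
  have hRnn : 0 ≤ ∫ z in (0:ℝ)..1, |g' z| ^ p :=
    intervalIntegral.integral_nonneg zero_le_one (fun u _ => by positivity)
  calc (∫ t in (0:ℝ)..1, |g t| ^ p) ^ (1 / p)
      ≤ (h ^ p / p * ∫ z in (0:ℝ)..1, |g' z| ^ p) ^ (1 / p) :=
        Real.rpow_le_rpow hLnn main (by positivity)
    _ = h / p ^ (1 / p) * (∫ z in (0:ℝ)..1, |g' z| ^ p) ^ (1 / p) := by
        rw [div_mul_eq_mul_div, Real.div_rpow (by positivity) ppos.le,
          Real.mul_rpow (Real.rpow_nonneg hh _) hRnn, ← Real.rpow_mul hh,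
          mul_one_div_cancel ppos.ne', Real.rpow_one]
        ring
end

section
/- With K as in the explicit formula (β > 0, Δ = α₀α₁ − α₂² + β(α₀+α₁+2α₂) ≠ 0), for every x ∈ (0,1) the function u = K(x,·) satisfies the boundary condition β u′(1) = −α₁ u(1) − α₂ u(0), where u′(1) is the slope of u on [x, 1]. -/
/-- Right boundary condition for the explicit kernel: for every `x ∈ (0,1)` the function
`u = K(x,·)` satisfies `β u'(1) = -α₁ u(1) - α₂ u(0)`, where `u'(1)` is the slope of `u`
on `[x,1]`. -/
theorem stmt_16 (α₀ α₁ α₂ β : ℝ) (hβ : 0 < β)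
    (Δ : ℝ) (hΔ : Δ = α₀ * α₁ - α₂ ^ 2 + β * (α₀ + α₁ + 2 * α₂)) (hΔne : Δ ≠ 0)
    (K : ℝ → ℝ → ℝ)
    (hK : ∀ x y : ℝ, K x y = 1 / (β * Δ) *
      (α₁ * β + β ^ 2 - max x y * (α₁ + α₂) * β +
        min x y * (α₀ * α₁ + α₀ * β - α₂ ^ 2 + α₂ * β) +
        x * y * (α₂ ^ 2 - α₀ * α₁)))
    (x : ℝ) (hx : x ∈ Set.Ioo (0:ℝ) 1) (a₂ b₂ : ℝ)
    (hright : ∀ y ∈ Set.Icc x 1, K x y = a₂ * y + b₂) :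
    β * a₂ = -α₁ * K x 1 - α₂ * K x 0 := by
  obtain ⟨hx0, hx1⟩ := hx
  have h1 := hright 1 ⟨hx1.le, le_refl 1⟩
  have h2 := hright x ⟨le_refl x, hx1.le⟩
  rw [hK] at h1 h2
  rw [hK x 1, hK x 0]
  rw [max_eq_right hx1.le, min_eq_left hx1.le] at h1
  rw [max_self, min_self] at h2
  rw [max_eq_right hx1.le, min_eq_left hx1.le, max_eq_left hx0.le, min_eq_right hx0.le]
  have hx1' : (1:ℝ) - x ≠ 0 := by linarith
  have hβΔ : β * Δ ≠ 0 := mul_ne_zero hβ.ne' hΔne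
  field_simp at h1 h2
  have key : (a₂ * (β * Δ)) * (1 - x) =
      (-(α₁ + α₂) * β + x * (α₂ ^ 2 - α₀ * α₁)) * (1 - x) := by
    linear_combination h2 - h1
  have ha : a₂ * (β * Δ) = -(α₁ + α₂) * β + x * (α₂ ^ 2 - α₀ * α₁) :=
    mul_right_cancel₀ hx1' key
  have ha' : a₂ = (-(α₁ + α₂) * β + x * (α₂ ^ 2 - α₀ * α₁)) / (β * Δ) := by
    field_simp
    linarith [ha]
  rw [ha']
  subst hΔ
  field_simp
  ring
end

section
/- Let f : [0,1] → ℝ be α-Hölder continuous with constant H (|f(x) − f(y)| ≤ H|x−y|^α, α ∈ (0,1]), and let T_n(f) = (1/n) ∑_{i=1}^n (f((i−1)/n) + f(i/n))/2 be the trapezoidal rule on the uniform grid. Then |∫₀¹ f(x) dx − T_n(f)| ≤ H / ((1+α) 2^α) · n^{−α}. -/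
open intervalIntegral Set



lemma trap_cont (f : ℝ → ℝ) (α H : ℝ) (hα0 : 0 < α) (hH0 : 0 ≤ H)
    (hH : ∀ x ∈ Set.Icc (0:ℝ) 1, ∀ y ∈ Set.Icc (0:ℝ) 1, |f x - f y| ≤ H * |x - y| ^ α) :
    ContinuousOn f (Set.Icc (0:ℝ) 1) := by
  have : HolderOnWith H.toNNReal α.toNNReal f (Set.Icc (0:ℝ) 1) := by
    intro x hx y hy
    rw [edist_dist, edist_dist, Real.coe_toNNReal α hα0.le,
      ENNReal.ofReal_rpow_of_nonneg dist_nonneg hα0.le,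
      show ((H.toNNReal : ENNReal)) = ENNReal.ofReal H from rfl,
      ← ENNReal.ofReal_mul hH0]
    exact ENNReal.ofReal_le_ofReal (by rw [Real.dist_eq, Real.dist_eq]; exact hH x hx y hy)
  exact this.continuousOn (Real.toNNReal_pos.mpr hα0)

lemma trap_key (f : ℝ → ℝ) (α H : ℝ) (hα0 : 0 < α) (hH0 : 0 ≤ H)
    (hH : ∀ x ∈ Set.Icc (0:ℝ) 1, ∀ y ∈ Set.Icc (0:ℝ) 1, |f x - f y| ≤ H * |x - y| ^ α)
    (a b : ℝ) (hab : a ≤ b) (ha : 0 ≤ a) (hb : b ≤ 1) :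
    |(∫ t in a..b, f t) - (b - a) * (f a + f b) / 2| ≤
      H * (b - a) ^ (1 + α) / ((1 + α) * 2 ^ α) := by
  have hcont := trap_cont f α H hα0 hH0 hH
  set s : ℝ := (b - a) / 2 with hs
  have hs0 : 0 ≤ s := div_nonneg (by linarith) (by norm_num)
  have hm : a + s = (a + b) / 2 := by rw [hs]; ring
  -- subinterval membership
  have hmem1 : ∀ t ∈ Set.Icc (0:ℝ) s, a + t ∈ Set.Icc (0:ℝ) 1 := by
    intro t ht
    constructor
    · linarith [ht.1]
    · have : t ≤ s := ht.2
      have : a + t ≤ a + s := by linarith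
      have : a + s ≤ b := by rw [hs]; linarith
      linarith [ht.2]
  have hmem2 : ∀ t ∈ Set.Icc (0:ℝ) s, b - t ∈ Set.Icc (0:ℝ) 1 := by
    intro t ht
    constructor
    · have : t ≤ s := ht.2
      have : b - s ≥ a := by rw [hs]; linarith
      linarith
    · linarith [ht.1]
  -- integrability pieces
  have hc1 : ContinuousOn (fun t => f (a + t)) (Set.Icc 0 s) :=
    hcont.comp (by fun_prop) (fun t ht => hmem1 t ht)
  have hc2 : ContinuousOn (fun t => f (b - t)) (Set.Icc 0 s) :=
    hcont.comp (by fun_prop) (fun t ht => hmem2 t ht)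
  have hi1 : IntervalIntegrable (fun t => f (a + t)) MeasureTheory.volume 0 s :=
    (hc1.mono (by rw [Set.uIcc_of_le hs0])).intervalIntegrable
  have hi2 : IntervalIntegrable (fun t => f (b - t)) MeasureTheory.volume 0 s :=
    (hc2.mono (by rw [Set.uIcc_of_le hs0])).intervalIntegrable
  have hif : IntervalIntegrable f MeasureTheory.volume a b :=
    (hcont.mono (by rw [Set.uIcc_of_le hab]; exact Set.Icc_subset_Icc ha hb)).intervalIntegrable
  -- rewrite the integral
  have e1 : (∫ t in a..b, f t) = (∫ t in (0:ℝ)..s, f (a + t)) + ∫ t in (0:ℝ)..s, f (b - t) := by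
    have h1 : (∫ t in (0:ℝ)..s, f (a + t)) = ∫ x in a..((a+b)/2), f x := by
      rw [intervalIntegral.integral_comp_add_left f a]
      norm_num [hm]
    have h2 : (∫ t in (0:ℝ)..s, f (b - t)) = ∫ x in ((a+b)/2)..b, f x := by
      rw [intervalIntegral.integral_comp_sub_left f b]
      have : b - s = (a + b) / 2 := by rw [hs]; ring
      rw [this, sub_zero]
    rw [h1, h2]
    have sub1 : Set.uIcc a ((a+b)/2) ⊆ Set.uIcc a b := by
      rw [Set.uIcc_of_le hab, Set.uIcc_of_le (by linarith : a ≤ (a+b)/2)]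
      exact Set.Icc_subset_Icc le_rfl (by linarith)
    have sub2 : Set.uIcc ((a+b)/2) b ⊆ Set.uIcc a b := by
      rw [Set.uIcc_of_le hab, Set.uIcc_of_le (by linarith : (a+b)/2 ≤ b)]
      exact Set.Icc_subset_Icc (by linarith) le_rfl
    exact (intervalIntegral.integral_add_adjacent_intervals
      (hif.mono_set sub1) (hif.mono_set sub2)).symm
  have e2 : (b - a) * (f a + f b) / 2 = ∫ t in (0:ℝ)..s, (f a + f b) := by
    rw [intervalIntegral.integral_const, smul_eq_mul, sub_zero, hs]; ring
  have e3 : (∫ t in a..b, f t) - (b - a) * (f a + f b) / 2 =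
      ∫ t in (0:ℝ)..s, ((f (a + t) - f a) + (f (b - t) - f b)) := by
    rw [e1, e2]
    rw [intervalIntegral.integral_add (hi1.sub (intervalIntegrable_const))
      (hi2.sub (intervalIntegrable_const)),
      intervalIntegral.integral_sub hi1 intervalIntegrable_const,
      intervalIntegral.integral_sub hi2 intervalIntegrable_const,
      intervalIntegral.integral_const, intervalIntegral.integral_const]
    simp [smul_eq_mul]
    ring
  rw [e3]
  -- bound by ∫ 2H t^α
  have hgi : IntervalIntegrable (fun t : ℝ => 2 * H * t ^ α) MeasureTheory.volume 0 s :=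
    (intervalIntegral.intervalIntegrable_rpow' (by linarith)).const_mul _
  have hbound : |∫ t in (0:ℝ)..s, ((f (a + t) - f a) + (f (b - t) - f b))| ≤
      |∫ t in (0:ℝ)..s, 2 * H * t ^ α| := by
    rw [show |∫ t in (0:ℝ)..s, ((f (a + t) - f a) + (f (b - t) - f b))| =
      ‖∫ t in (0:ℝ)..s, ((f (a + t) - f a) + (f (b - t) - f b))‖ from (Real.norm_eq_abs _).symm]
    apply intervalIntegral.norm_integral_le_abs_of_norm_le _ hgi
    rw [Set.uIoc_of_le hs0]
    filter_upwards [MeasureTheory.ae_restrict_mem measurableSet_Ioc] with t ht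
    have ht0 : 0 < t := ht.1
    have hts : t ≤ s := ht.2
    have b1 : |f (a + t) - f a| ≤ H * t ^ α := by
      have := hH (a + t) (hmem1 t ⟨ht0.le, hts⟩) a ⟨ha, by linarith⟩
      simpa [abs_of_pos ht0] using this
    have b2 : |f (b - t) - f b| ≤ H * t ^ α := by
      have := hH (b - t) (hmem2 t ⟨ht0.le, hts⟩) b ⟨by linarith, hb⟩
      have h3 : |b - t - b| = t := by rw [abs_of_nonpos (by linarith)]; ring
      rw [h3] at this
      exact this
    calc ‖f (a + t) - f a + (f (b - t) - f b)‖
        ≤ |f (a + t) - f a| + |f (b - t) - f b| := abs_add_le _ _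
      _ ≤ H * t ^ α + H * t ^ α := add_le_add b1 b2
      _ = 2 * H * t ^ α := by ring
  refine hbound.trans ?_
  -- compute the gauge integral
  have hval : (∫ t in (0:ℝ)..s, 2 * H * t ^ α) = 2 * H * (s ^ (1 + α) / (1 + α)) := by
    rw [intervalIntegral.integral_const_mul, integral_rpow (Or.inl (by linarith))]
    rw [Real.zero_rpow (by linarith), sub_zero, add_comm α 1]
  rw [hval]
  have hspow : s ^ (1 + α) = (b - a) ^ (1 + α) / 2 ^ (1 + α) := by
    rw [hs, Real.div_rpow (by linarith) (by norm_num)]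
  have h2a : (2:ℝ) ^ (1 + α) = 2 * 2 ^ α := by
    rw [Real.rpow_add (by norm_num), Real.rpow_one]
  have hpos1 : (0:ℝ) < 1 + α := by linarith
  have hpos2 : (0:ℝ) < 2 ^ α := Real.rpow_pos_of_pos (by norm_num) α
  rw [abs_of_nonneg (by positivity), hspow, h2a]
  rw [show 2 * H * ((b - a) ^ (1 + α) / (2 * 2 ^ α) / (1 + α)) =
      H * (b - a) ^ (1 + α) / ((1 + α) * 2 ^ α) from by field_simp]


/-- Trapezoidal rule error for Hölder continuous functions: if `f` is `α`-Hölder with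
constant `H` on `[0,1]`, then the uniform-grid trapezoidal rule satisfies
`|∫₀¹ f - Tₙ(f)| ≤ H / ((1+α) 2^α) · n^{-α}`. -/
theorem stmt_17 (f : ℝ → ℝ) (α H : ℝ) (hα : α ∈ Set.Ioc (0:ℝ) 1)
    (hH : ∀ x ∈ Set.Icc (0:ℝ) 1, ∀ y ∈ Set.Icc (0:ℝ) 1, |f x - f y| ≤ H * |x - y| ^ α)
    (n : ℕ) (hn : 0 < n) :
    |(∫ t in (0:ℝ)..1, f t) -
        ∑ i ∈ Finset.range n, (f (i / n) + f ((i + 1) / n)) / (2 * n)| ≤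
      H / ((1 + α) * 2 ^ α) * (n : ℝ) ^ (-α) := by
  obtain ⟨hα0, hα1⟩ := hα
  have hH0 : 0 ≤ H := by
    have h := hH 0 ⟨le_refl 0, zero_le_one⟩ 1 ⟨zero_le_one, le_refl 1⟩
    simp [Real.one_rpow] at h
    exact le_trans (abs_nonneg _) h
  have hnp : (0:ℝ) < n := by exact_mod_cast hn
  have hn0 : (n:ℝ) ≠ 0 := ne_of_gt hnp
  have hcont := trap_cont f α H hα0 hH0 hH
  set a : ℕ → ℝ := fun i => i / n with ha
  have hab : ∀ i : ℕ, i ≤ n → 0 ≤ a i ∧ a i ≤ 1 := by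
    intro i hi
    constructor
    · exact div_nonneg (Nat.cast_nonneg i) hnp.le
    · rw [div_le_one hnp]; exact_mod_cast hi
  have hmono : ∀ i : ℕ, a i ≤ a (i+1) := by
    intro i
    rw [ha]
    push_cast
    gcongr
    linarith
  have hint : ∀ k < n, IntervalIntegrable f MeasureTheory.volume (a k) (a (k+1)) := by
    intro k hk
    apply (hcont.mono ?_).intervalIntegrable
    rw [Set.uIcc_of_le (hmono k)]
    exact Set.Icc_subset_Icc (hab k hk.le).1 (hab (k+1) hk).2
  have hsplit : (∫ t in (0:ℝ)..1, f t) =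
      ∑ i ∈ Finset.range n, ∫ t in a i..a (i+1), f t := by
    rw [intervalIntegral.sum_integral_adjacent_intervals hint]
    have h0 : a 0 = 0 := by simp [ha]
    have h1 : a n = 1 := by simp [ha, div_self hn0]
    rw [h0, h1]
  rw [hsplit, ← Finset.sum_sub_distrib]
  calc |∑ i ∈ Finset.range n, ((∫ t in a i..a (i+1), f t) -
          (f (i / n) + f ((i + 1) / n)) / (2 * n))|
      ≤ ∑ i ∈ Finset.range n, |(∫ t in a i..a (i+1), f t) -
          (f (i / n) + f ((i + 1) / n)) / (2 * n)| := Finset.abs_sum_le_sum_abs _ _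
    _ ≤ ∑ i ∈ Finset.range n, H * (1/n) ^ (1 + α) / ((1 + α) * 2 ^ α) := by
        apply Finset.sum_le_sum
        intro i hi
        have hi' : i < n := Finset.mem_range.mp hi
        have key := trap_key f α H hα0 hH0 hH (a i) (a (i+1)) (hmono i)
          (hab i hi'.le).1 (hab (i+1) hi').2
        have e1 : a i = (i:ℝ)/n := rfl
        have e2 : a (i+1) = ((i:ℝ)+1)/n := by rw [ha]; push_cast; ring
        have hd : a (i+1) - a i = 1/(n:ℝ) := by rw [e1, e2]; field_simp; ring
        have ht : 1/(n:ℝ) * (f (a i) + f (a (i+1))) / 2 =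
            (f ((i:ℝ) / n) + f (((i:ℝ) + 1) / n)) / (2 * n) := by
          rw [e1, e2]; ring
        rw [hd, ht] at key
        exact key
    _ = n * (H * (1/n) ^ (1 + α) / ((1 + α) * 2 ^ α)) := by
        rw [Finset.sum_const, Finset.card_range, nsmul_eq_mul]
    _ = H / ((1 + α) * 2 ^ α) * (n : ℝ) ^ (-α) := by
        rw [one_div, Real.inv_rpow hnp.le, Real.rpow_add hnp, Real.rpow_one,
          Real.rpow_neg hnp.le]
        have h2 : ((n:ℝ) ^ α) ≠ 0 := ne_of_gt (Real.rpow_pos_of_pos hnp α)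
        have h3 : (1 + α) * 2 ^ α ≠ 0 :=
          ne_of_gt (mul_pos (by linarith) (Real.rpow_pos_of_pos two_pos α))
        field_simp
end
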